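/- Let Γ be the free ℤ-module with basis g₁ = (f,-f), g₂ = (e₂,0), g₃ = (0,e₁), g₄ = (0,e₂) inside ℚ⁴ × ℚ⁴ (restricted to the span of e₁, e₂, f = (e₁+e₂)/2), and let Γ'' be the submodule generated by (f,-f), (e₂,-e₂), (f,-f+e₂), (e₂,e₁), where σ acts by σe₁=e₂, σe₂=-e₁. Then Γ'' has finite index in Γ and Γ/Γ'' is trivial. -/

import Mathlib

/-- In `V × V` with `V = ℚe₁ ⊕ ℚe₂` and `f = (e₁+e₂)/2`, the submodule `Γ''` generated by
`(f,-f), (e₂,-e₂), (f,-f+e₂), (e₂,e₁)` has finite index in the lattice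
`Γ = ℤ⟨(f,-f), (e₂,0), (0,e₁), (0,e₂)⟩` and `Γ/Γ''` is trivial. -/
theorem first_summand_quotient_trivial
    (e₁ e₂ f : Fin 2 → ℚ)
    (he₁ : e₁ = ![1, 0]) (he₂ : e₂ = ![0, 1]) (hf : f = (2⁻¹ : ℚ) • (e₁ + e₂))
    (Γ : Submodule ℤ ((Fin 2 → ℚ) × (Fin 2 → ℚ)))
    (hΓ : Γ = Submodule.span ℤ {(f, -f), (e₂, 0), (0, e₁), (0, e₂)})
    (Γ'' : Submodule ℤ ((Fin 2 → ℚ) × (Fin 2 → ℚ)))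
    (hΓ'' : Γ'' = Submodule.span ℤ {(f, -f), (e₂, -e₂), (f, -f + e₂), (e₂, e₁)}) :
    Finite (Γ ⧸ Submodule.comap Γ.subtype Γ'') ∧
    Subsingleton (Γ ⧸ Submodule.comap Γ.subtype Γ'') := by
  have ha : (f, -f) ∈ Γ'' := by
    rw [hΓ'']; exact Submodule.subset_span (by simp)
  have hb : (e₂, -e₂) ∈ Γ'' := by
    rw [hΓ'']; exact Submodule.subset_span (by simp)
  have hc : (f, -f + e₂) ∈ Γ'' := by
    rw [hΓ'']; exact Submodule.subset_span (by simp)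
  have hd : (e₂, e₁) ∈ Γ'' := by
    rw [hΓ'']; exact Submodule.subset_span (by simp)
  have h1 : ((0 : Fin 2 → ℚ), e₂) ∈ Γ'' := by
    have := Γ''.sub_mem hc ha
    simpa using this
  have h2 : (e₂, (0 : Fin 2 → ℚ)) ∈ Γ'' := by
    have := Γ''.add_mem hb h1
    simpa using this
  have h3 : ((0 : Fin 2 → ℚ), e₁) ∈ Γ'' := by
    have := Γ''.sub_mem hd h2
    simpa using this
  have hle : Γ ≤ Γ'' := by
    rw [hΓ]
    apply Submodule.span_le.2
    intro x hx
    simp only [Set.mem_insert_iff, Set.mem_singleton_iff] at hx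
    rcases hx with rfl | rfl | rfl | rfl
    · exact ha
    · exact h2
    · exact h3
    · exact h1
  have htop : Submodule.comap Γ.subtype Γ'' = ⊤ := by
    rw [Submodule.eq_top_iff']
    intro x
    exact hle x.2
  have hsub : Subsingleton (Γ ⧸ Submodule.comap Γ.subtype Γ'') := by
    rw [htop]
    exact Submodule.Quotient.subsingleton_iff.2 rfl
  exact ⟨Finite.of_subsingleton, hsub⟩
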